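/- The β-VaR minimizes the auxiliary function: F_β(η_β) = ⨅_{η ∈ ℝ} F_β(η); that is, the β-CVaR φ_β equals the value of F_β evaluated at the β-VaR, φ_β = F_β(η_β). -/

import Mathlib

open MeasureTheory Set Filter Topology

/-- The β-VaR minimizes the auxiliary function: `F_β(η_β) = ⨅_η F_β(η)`,
i.e. the β-CVaR `φ_β` equals `F_β(η_β)`. -/
theorem var_minimizes_auxiliary
    {Ω : Type*} [MeasurableSpace Ω] (μ : Measure Ω) [IsProbabilityMeasure μ]
    (L : Ω → ℝ) (hL : Integrable L μ)
    (β : ℝ) (hβ : β ∈ Set.Ioo (0 : ℝ) 1)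
    (ηβ : ℝ) (hηβ : ηβ = sInf {η : ℝ | β ≤ (μ {ω | L ω ≤ η}).toReal})
    (Fb : ℝ → ℝ)
    (hFb : ∀ η, Fb η = η + (1 - β)⁻¹ * ∫ ω, max (L ω - η) 0 ∂μ) :
    Fb ηβ = ⨅ η : ℝ, Fb η := by
  obtain ⟨hβ0, hβ1⟩ := hβ
  have h1β : (0:ℝ) < 1 - β := by linarith
  -- measurable modification of L
  set g : Ω → ℝ := hL.1.mk L with hg
  have hLg : L =ᵐ[μ] g := hL.1.ae_eq_mk
  have hgm : Measurable g := hL.1.stronglyMeasurable_mk.measurable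
  have hgint : Integrable g μ := hL.congr hLg
  have hmeq : ∀ η : ℝ, μ {ω | L ω ≤ η} = μ {ω | g ω ≤ η} := by
    intro η
    refine measure_congr ?_
    filter_upwards [hLg] with ω h
    show (L ω ≤ η) = (g ω ≤ η)
    rw [h]
  have hieq : ∀ η : ℝ, (∫ ω, max (L ω - η) 0 ∂μ) = ∫ ω, max (g ω - η) 0 ∂μ := by
    intro η
    refine integral_congr_ae ?_
    filter_upwards [hLg] with ω h
    rw [h]
  have hFb' : ∀ η, Fb η = η + (1 - β)⁻¹ * ∫ ω, max (g ω - η) 0 ∂μ := by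
    intro η; rw [hFb, hieq]
  have hint : ∀ η : ℝ, Integrable (fun ω => max (g ω - η) 0) μ := by
    intro η
    exact (hgint.sub (integrable_const η)).pos_part
  -- the set S
  set S : Set ℝ := {η : ℝ | β ≤ (μ {ω | g ω ≤ η}).toReal} with hSdef
  have hηβ' : ηβ = sInf S := by
    rw [hηβ]; congr 1; ext η; simp only [hSdef, Set.mem_setOf_eq, hmeq]
  -- monotonicity of the CDF
  have hmono : ∀ a b : ℝ, a ≤ b → μ {ω | g ω ≤ a} ≤ μ {ω | g ω ≤ b} := by
    intro a b hab
    exact measure_mono (fun ω hω => le_trans hω hab)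
  have hne : ∀ s : Set Ω, μ s ≠ ⊤ := fun s => measure_ne_top μ s
  -- S is nonempty
  have hSne : S.Nonempty := by
    have hm : Monotone (fun n : ℕ => {ω | g ω ≤ (n : ℝ)}) := by
      intro m n hmn ω hω
      simp only [Set.mem_setOf_eq] at hω ⊢
      have : (m : ℝ) ≤ n := Nat.cast_le.2 hmn
      linarith
    have hu : (⋃ n : ℕ, {ω | g ω ≤ (n : ℝ)}) = Set.univ := by
      ext ω; simp only [Set.mem_iUnion, Set.mem_setOf_eq, Set.mem_univ, iff_true]
      exact exists_nat_ge (g ω)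
    have ht := tendsto_measure_iUnion_atTop (μ := μ) hm
    rw [hu, measure_univ] at ht
    have hlt : ENNReal.ofReal β < 1 := by
      rw [← ENNReal.ofReal_one]
      exact ENNReal.ofReal_lt_ofReal_iff one_pos |>.2 hβ1
    have := ht.eventually (eventually_gt_nhds hlt)
    obtain ⟨n, hn⟩ := this.exists
    refine ⟨(n : ℝ), ?_⟩
    have := (ENNReal.ofReal_le_iff_le_toReal (hne _)).1 hn.le
    exact this
  -- S is bounded below
  have hSbdd : BddBelow S := by
    have hm : Antitone (fun n : ℕ => {ω | g ω ≤ -(n : ℝ)}) := by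
      intro m n hmn ω hω
      simp only [Set.mem_setOf_eq] at hω ⊢
      have : (m : ℝ) ≤ n := Nat.cast_le.2 hmn
      linarith
    have hi : (⋂ n : ℕ, {ω | g ω ≤ -(n : ℝ)}) = ∅ := by
      ext ω; simp only [Set.mem_iInter, Set.mem_setOf_eq, Set.mem_empty_iff_false, iff_false]
      intro h
      obtain ⟨n, hn⟩ := exists_nat_ge (-(g ω))
      have h2 := h (n + 1); push_cast at h2; linarith
    have ht := tendsto_measure_iInter_atTop (μ := μ)
      (s := fun n : ℕ => {ω | g ω ≤ -(n : ℝ)})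
      (fun n => (measurableSet_le hgm measurable_const).nullMeasurableSet) hm ⟨0, hne _⟩
    rw [hi, measure_empty] at ht
    have hlt : (0 : ENNReal) < ENNReal.ofReal β := ENNReal.ofReal_pos.2 hβ0
    obtain ⟨n, hn⟩ := (ht.eventually (eventually_lt_nhds hlt)).exists
    refine ⟨-(n:ℝ), fun s hs => ?_⟩
    by_contra hcon
    push_neg at hcon
    have h1 : μ {ω | g ω ≤ s} ≤ μ {ω | g ω ≤ -(n:ℝ)} := hmono _ _ hcon.le
    have h2 : (μ {ω | g ω ≤ s}).toReal < β := by
      have := lt_of_le_of_lt h1 hn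
      exact (ENNReal.lt_ofReal_iff_toReal_lt (hne _)).1 this
    exact absurd hs (by simp only [hSdef, Set.mem_setOf_eq]; linarith)
  -- Ψ(ηβ) ≥ β
  have hΨηβ : β ≤ (μ {ω | g ω ≤ ηβ}).toReal := by
    have hm : Antitone (fun n : ℕ => {ω | g ω ≤ ηβ + 1/(n+1)}) := by
      intro m n hmn ω hω
      simp only [Set.mem_setOf_eq] at hω ⊢
      refine le_trans hω ?_
      have : (1:ℝ)/(n+1) ≤ 1/(m+1) := by
        apply one_div_le_one_div_of_le (by positivity)
        exact_mod_cast add_le_add_left (Nat.cast_le.2 hmn) 1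
      linarith
    have hi : (⋂ n : ℕ, {ω | g ω ≤ ηβ + 1/(n+1)}) = {ω | g ω ≤ ηβ} := by
      ext ω; simp only [Set.mem_iInter, Set.mem_setOf_eq]
      constructor
      · intro h
        refine le_of_forall_pos_le_add fun ε hε => ?_
        obtain ⟨n, hn⟩ := exists_nat_one_div_lt hε
        exact le_trans (h n) (by push_cast; linarith)
      · intro h n
        have : (0:ℝ) < 1/(n+1) := by positivity
        linarith
    have ht := tendsto_measure_iInter_atTop (μ := μ)
      (s := fun n : ℕ => {ω | g ω ≤ ηβ + 1/(n+1)})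
      (fun n => (measurableSet_le hgm measurable_const).nullMeasurableSet) hm ⟨0, hne _⟩
    rw [hi] at ht
    have hev : ∀ n : ℕ, ENNReal.ofReal β ≤ μ {ω | g ω ≤ ηβ + 1/(n+1)} := by
      intro n
      have hpos : (0:ℝ) < 1/(n+1) := by positivity
      have hlt2 : sInf S < ηβ + 1/(n+1) := by rw [← hηβ']; linarith
      obtain ⟨s, hsS, hs⟩ := exists_lt_of_csInf_lt hSne hlt2
      have h1 : β ≤ (μ {ω | g ω ≤ s}).toReal := hsS
      have h2 : μ {ω | g ω ≤ s} ≤ μ {ω | g ω ≤ ηβ + 1/(n+1)} := hmono _ _ hs.le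
      calc ENNReal.ofReal β ≤ μ {ω | g ω ≤ s} :=
            (ENNReal.ofReal_le_iff_le_toReal (hne _)).2 h1
        _ ≤ _ := h2
    have hlim : ENNReal.ofReal β ≤ μ {ω | g ω ≤ ηβ} :=
      ge_of_tendsto ht (Eventually.of_forall hev)
    exact (ENNReal.ofReal_le_iff_le_toReal (hne _)).1 hlim
  -- μ {g < ηβ} ≤ β
  have hlow : (μ {ω | g ω < ηβ}).toReal ≤ β := by
    have hm : Monotone (fun n : ℕ => {ω | g ω ≤ ηβ - 1/(n+1)}) := by
      intro m n hmn ω hω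
      simp only [Set.mem_setOf_eq] at hω ⊢
      refine le_trans hω ?_
      have : (1:ℝ)/(n+1) ≤ 1/(m+1) := by
        apply one_div_le_one_div_of_le (by positivity)
        exact_mod_cast add_le_add_left (Nat.cast_le.2 hmn) 1
      linarith
    have hu : (⋃ n : ℕ, {ω | g ω ≤ ηβ - 1/(n+1)}) = {ω | g ω < ηβ} := by
      ext ω; simp only [Set.mem_iUnion, Set.mem_setOf_eq]
      constructor
      · rintro ⟨n, hn⟩
        have : (0:ℝ) < 1/(n+1) := by positivity
        linarith
      · intro h
        obtain ⟨n, hn⟩ := exists_nat_one_div_lt (sub_pos.2 h)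
        exact ⟨n, by push_cast at hn ⊢; linarith⟩
    have ht := tendsto_measure_iUnion_atTop (μ := μ) hm
    rw [hu] at ht
    have hev : ∀ n : ℕ, μ {ω | g ω ≤ ηβ - 1/(n+1)} ≤ ENNReal.ofReal β := by
      intro n
      have hpos : (0:ℝ) < 1/(n+1) := by positivity
      have hlt : ηβ - 1/(n+1) < ηβ := by linarith
      have hnotin : (ηβ - 1/(n+1)) ∉ S := by
        intro hmem
        have h3 := csInf_le hSbdd hmem
        rw [← hηβ'] at h3
        linarith
      have : (μ {ω | g ω ≤ ηβ - 1/(n+1)}).toReal < β := by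
        by_contra hcon; push_neg at hcon; exact hnotin hcon
      exact ((ENNReal.lt_ofReal_iff_toReal_lt (hne _)).2 this).le
    have hlim : μ {ω | g ω < ηβ} ≤ ENNReal.ofReal β :=
      le_of_tendsto ht (Eventually.of_forall hev)
    exact ENNReal.toReal_le_of_le_ofReal hβ0.le hlim
  -- probability complement facts
  have hcompl : ∀ s : Set Ω, MeasurableSet s → (μ sᶜ).toReal = 1 - (μ s).toReal := by
    intro s hs
    rw [measure_compl hs (hne s), measure_univ,
      ENNReal.toReal_sub_of_le prob_le_one ENNReal.one_ne_top, ENNReal.toReal_one]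
  -- The key monotonicity lemma: for ηβ ≤ b, Fb ηβ ≤ Fb b
  have keyA : ∀ b : ℝ, ηβ ≤ b → Fb ηβ ≤ Fb b := by
    intro b hab
    set a := ηβ
    set s : Set Ω := {ω | a < g ω} with hsdef
    have hsm : MeasurableSet s := measurableSet_lt measurable_const hgm
    have hptwise : ∀ ω, s.indicator (fun _ => -(b - a)) ω ≤
        max (g ω - b) 0 - max (g ω - a) 0 := by
      intro ω
      by_cases hω : a < g ω
      · rw [Set.indicator_of_mem (show ω ∈ s from hω)]
        have h1 : max (g ω - a) 0 = g ω - a := max_eq_left (by linarith)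
        have h2 : g ω - b ≤ max (g ω - b) 0 := le_max_left _ _
        linarith
      · rw [Set.indicator_of_notMem (show ω ∉ s from hω)]
        push_neg at hω
        have h1 : max (g ω - a) 0 = 0 := max_eq_right (by linarith)
        have h2 : max (g ω - b) 0 = 0 := max_eq_right (by linarith)
        linarith
    have hind : Integrable (s.indicator (fun _ => -(b - a))) μ :=
      (integrable_indicator_iff hsm).2 (integrableOn_const (measure_lt_top μ s).ne)
    have hIle : -(b - a) * (μ s).toReal ≤
        (∫ ω, max (g ω - b) 0 ∂μ) - ∫ ω, max (g ω - a) 0 ∂μ := by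
      have := integral_mono hind
        (((hint b).sub (hint a)) :
          Integrable (fun ω => max (g ω - b) 0 - max (g ω - a) 0) μ) hptwise
      simp only [Pi.sub_apply] at this
      rwa [integral_indicator_const _ hsm, smul_eq_mul, mul_comm,
        integral_sub (hint b) (hint a)] at this
    have hμs : (μ s).toReal ≤ 1 - β := by
      have : s = {ω | g ω ≤ a}ᶜ := by ext ω; simp [hsdef, not_le]
      rw [this, hcompl _ (measurableSet_le hgm measurable_const)]
      linarith [hΨηβ]
    rw [hFb' a, hFb' b]
    set Ia := ∫ ω, max (g ω - a) 0 ∂μ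
    set Ib := ∫ ω, max (g ω - b) 0 ∂μ
    have hμs0 : (0:ℝ) ≤ (μ s).toReal := ENNReal.toReal_nonneg
    have hstep : -(b - a) * (1 - β) ≤ Ib - Ia := by
      have : -(b-a) * (1-β) ≤ -(b-a) * (μ s).toReal := by nlinarith
      linarith
    have hc : (1-β)⁻¹ * (1-β) = 1 := inv_mul_cancel₀ (ne_of_gt h1β)
    have : (1-β)⁻¹ * (-(b-a) * (1-β)) ≤ (1-β)⁻¹ * (Ib - Ia) :=
      mul_le_mul_of_nonneg_left hstep (le_of_lt (inv_pos.2 h1β))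
    have heq : (1-β)⁻¹ * (-(b-a) * (1-β)) = -(b-a) := by
      field_simp
    rw [heq] at this
    have : -(b-a) ≤ (1-β)⁻¹ * Ib - (1-β)⁻¹ * Ia := by rw [← mul_sub]; exact this
    linarith
  -- key lemma B: for a ≤ ηβ, Fb ηβ ≤ Fb a
  have keyB : ∀ a : ℝ, a ≤ ηβ → Fb ηβ ≤ Fb a := by
    intro a hab
    set b := ηβ
    set s : Set Ω := {ω | b ≤ g ω} with hsdef
    have hsm : MeasurableSet s := measurableSet_le measurable_const hgm
    have hptwise : ∀ ω, max (g ω - b) 0 - max (g ω - a) 0 ≤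
        s.indicator (fun _ => -(b - a)) ω := by
      intro ω
      by_cases hω : b ≤ g ω
      · rw [Set.indicator_of_mem (show ω ∈ s from hω)]
        have h1 : max (g ω - b) 0 = g ω - b := max_eq_left (by linarith)
        have h2 : max (g ω - a) 0 = g ω - a := max_eq_left (by linarith)
        linarith
      · rw [Set.indicator_of_notMem (show ω ∉ s from hω)]
        push_neg at hω
        have h1 : max (g ω - b) 0 = 0 := max_eq_right (by linarith)
        have h2 : (0:ℝ) ≤ max (g ω - a) 0 := le_max_right _ _
        linarith
    have hind : Integrable (s.indicator (fun _ => -(b - a))) μ :=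
      (integrable_indicator_iff hsm).2 (integrableOn_const (measure_lt_top μ s).ne)
    have hIle : (∫ ω, max (g ω - b) 0 ∂μ) - (∫ ω, max (g ω - a) 0 ∂μ) ≤
        -(b - a) * (μ s).toReal := by
      have := integral_mono
        (((hint b).sub (hint a)) :
          Integrable (fun ω => max (g ω - b) 0 - max (g ω - a) 0) μ) hind hptwise
      simp only [Pi.sub_apply] at this
      rwa [integral_indicator_const _ hsm, smul_eq_mul, mul_comm,
        integral_sub (hint b) (hint a)] at this
    have hμs : 1 - β ≤ (μ s).toReal := by
      have : s = {ω | g ω < b}ᶜ := by ext ω; simp [hsdef, not_lt]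
      rw [this, hcompl _ (measurableSet_lt hgm measurable_const)]
      linarith [hlow]
    rw [hFb' a, hFb' b]
    set Ia := ∫ ω, max (g ω - a) 0 ∂μ
    set Ib := ∫ ω, max (g ω - b) 0 ∂μ
    have hstep : Ib - Ia ≤ -(b - a) * (1 - β) := by
      have : -(b-a) * (μ s).toReal ≤ -(b-a) * (1-β) := by nlinarith
      linarith
    have : (1-β)⁻¹ * (Ib - Ia) ≤ (1-β)⁻¹ * (-(b-a) * (1-β)) :=
      mul_le_mul_of_nonneg_left hstep (le_of_lt (inv_pos.2 h1β))
    have heq : (1-β)⁻¹ * (-(b-a) * (1-β)) = -(b-a) := by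
      field_simp
    rw [heq] at this
    have : (1-β)⁻¹ * Ib - (1-β)⁻¹ * Ia ≤ -(b-a) := by rw [← mul_sub]; exact this
    linarith
  have hkey : ∀ η : ℝ, Fb ηβ ≤ Fb η := by
    intro η
    rcases le_total ηβ η with h | h
    · exact keyA η h
    · exact keyB η h
  refine le_antisymm (le_ciInf hkey)
    (ciInf_le ⟨Fb ηβ, by rintro x ⟨i, rfl⟩; exact hkey i⟩ ηβ)
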